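/- Let t, m be positive integers and G a group of order t·m acting on X = {T ⊆ G : |T| = t} by left multiplication. If g ∈ G has order dividing t, say order t/d, then the number of fixed points of g in X equals C(dm, d) = C(dm−1, d−1)·m; and if the order of g does not divide t then g has no fixed points in X. -/

import Mathlib

open scoped Classical

/-- In a group `G` of order `t * m`, acting on its `t`-element subsets by left
multiplication: if `orderOf g ∣ t`, writing `d = t / orderOf g`, the number of fixed
points of `g` equals `C(dm, d) = C(dm-1, d-1) * m`; if `orderOf g ∤ t`, then `g` has
no fixed points. -/
theorem stmt1 (t m : ℕ) (ht : 0 < t) (hm : 0 < m) (G : Type*) [Group G] [Fintype G]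
    (hG : Fintype.card G = t * m) (g : G) :
    (orderOf g ∣ t →
      (Finset.univ.filter fun T : Finset G =>
          T.card = t ∧ T.image (fun x => g * x) = T).card
        = (t / orderOf g * m).choose (t / orderOf g) ∧
      (t / orderOf g * m).choose (t / orderOf g)
        = (t / orderOf g * m - 1).choose (t / orderOf g - 1) * m) ∧
    (¬ orderOf g ∣ t →
      (Finset.univ.filter fun T : Finset G =>
          T.card = t ∧ T.image (fun x => g * x) = T).card = 0) := by
  classical
  set k := orderOf g with hk
  have hk0 : 0 < k := orderOf_pos g
  set H := Subgroup.zpowers g with hHdef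
  letI : Fintype (Quotient (QuotientGroup.rightRel H)) := Quotient.fintype _
  set Q := Quotient (QuotientGroup.rightRel H) with hQdef
  let mk : G → Q := Quotient.mk''
  have hmkeq : ∀ x y : G, mk x = mk y ↔ y * x⁻¹ ∈ H := by
    intro x y
    rw [show mk x = Quotient.mk'' x from rfl, show mk y = Quotient.mk'' y from rfl,
      Quotient.eq'']
    exact QuotientGroup.rightRel_apply
  -- each fiber of mk has k elements
  have hfiber : ∀ q : Q, (Finset.univ.filter fun x : G => mk x = q).card = k := by
    intro q
    induction q using Quotient.inductionOn' with
    | h x =>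
      have heq : (Finset.univ.filter fun y : G => mk y = Quotient.mk'' x)
          = Finset.univ.image (fun h : H => (h : G) * x) := by
        ext y
        simp only [Finset.mem_filter, Finset.mem_univ, true_and, Finset.mem_image]
        rw [show (Quotient.mk'' x : Q) = mk x from rfl, hmkeq]
        constructor
        · intro h
          have h' : y * x⁻¹ ∈ H := (Subgroup.inv_mem_iff H).1 (by simpa using h)
          exact ⟨⟨y * x⁻¹, h'⟩, by group⟩
        · rintro ⟨⟨h, hh⟩, rfl⟩
          have he : x * (h * x)⁻¹ = h⁻¹ := by group
          rw [he]
          exact (Subgroup.inv_mem_iff H).2 hh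
      rw [heq, Finset.card_image_of_injective _
        (fun a b hab => Subtype.ext (mul_right_cancel hab)), Finset.card_univ]
      exact Fintype.card_zpowers
  -- card of a union of fibers
  have hfilterS : ∀ S : Finset Q,
      (Finset.univ.filter fun x : G => mk x ∈ S).card = S.card * k := by
    intro S
    rw [Finset.card_eq_sum_card_fiberwise (f := mk) (t := S) (s := Finset.univ.filter fun x : G => mk x ∈ S)
      (fun x hx => (Finset.mem_filter.1 hx).2)]
    have : ∀ q ∈ S, ((Finset.univ.filter fun x : G => mk x ∈ S).filter
        fun x => mk x = q) = Finset.univ.filter fun x : G => mk x = q := by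
      intro q hq
      ext x
      simp only [Finset.filter_filter, Finset.mem_filter, Finset.mem_univ, true_and]
      exact ⟨fun h => h.2, fun h => ⟨h ▸ hq, h⟩⟩
    rw [Finset.sum_congr rfl fun q hq => by rw [this q hq, hfiber q]]
    simp [mul_comm]
  -- card Q * k = t * m
  have hQcard : Fintype.card Q * k = t * m := by
    have h1 := Finset.card_eq_sum_card_fiberwise
      (s := (Finset.univ : Finset G)) (t := (Finset.univ : Finset Q)) (f := mk)
      (fun x _ => Finset.mem_univ _)
    have h2 : (Finset.univ : Finset G).card = ∑ q : Q, k := by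
      rw [h1]; exact Finset.sum_congr rfl fun q _ => hfiber q
    rw [Finset.card_univ, hG, Finset.sum_const, Finset.card_univ, smul_eq_mul] at h2
    exact h2.symm
  -- a fixed set is the union of the fibers it meets
  have key : ∀ T : Finset G, T.image (fun x => g * x) = T →
      T = Finset.univ.filter fun x => mk x ∈ T.image mk := by
    intro T hT
    have hstep : ∀ x ∈ T, g * x ∈ T := by
      intro x hx
      rw [← hT]; exact Finset.mem_image_of_mem _ hx
    have hpow : ∀ (n : ℕ), ∀ x ∈ T, g ^ n * x ∈ T := by
      intro n
      induction n with
      | zero => simpa using fun x hx => hx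
      | succ n ih =>
        intro x hx
        have h2 := hstep _ (ih x hx)
        rwa [← mul_assoc, ← pow_succ'] at h2
    have hmem : ∀ h ∈ H, ∀ x ∈ T, h * x ∈ T := by
      intro h hh x hx
      rw [hHdef, ← mem_powers_iff_mem_zpowers] at hh
      obtain ⟨n, rfl⟩ := hh
      exact hpow n x hx
    ext x
    simp only [Finset.mem_filter, Finset.mem_univ, true_and, Finset.mem_image]
    constructor
    · intro hx; exact ⟨x, hx, rfl⟩
    · rintro ⟨y, hy, hxy⟩
      have h3 : x * y⁻¹ ∈ H := (hmkeq y x).mp hxy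
      have h4 := hmem _ h3 y hy
      simpa using h4
  -- fixed sets of card t force k ∣ t
  have hcard_of_fixed : ∀ T : Finset G, T.image (fun x => g * x) = T →
      T.card = (T.image mk).card * k := by
    intro T hT
    conv_lhs => rw [key T hT]
    exact hfilterS _
  constructor
  · intro hdvd
    set d := t / k with hd
    have hdk : d * k = t := Nat.div_mul_cancel hdvd
    have hd0 : 0 < d := by
      rcases Nat.eq_zero_or_pos d with h | h
      · rw [h, zero_mul] at hdk; omega
      · exact h
    have hQm : Fintype.card Q = d * m := by
      have : Fintype.card Q * k = (d * m) * k := by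
        rw [hQcard, ← hdk]; ring
      exact Nat.eq_of_mul_eq_mul_right hk0 this
    have hbij : (Finset.univ.filter fun T : Finset G =>
          T.card = t ∧ T.image (fun x => g * x) = T).card
        = (Finset.powersetCard d (Finset.univ : Finset Q)).card := by
      apply Finset.card_bij (fun T _ => T.image mk)
      · intro T hT
        simp only [Finset.mem_filter, Finset.mem_univ, true_and] at hT
        rw [Finset.mem_powersetCard]
        refine ⟨Finset.subset_univ _, ?_⟩
        have h5 := hcard_of_fixed T hT.2
        rw [hT.1, ← hdk] at h5
        exact (Nat.eq_of_mul_eq_mul_right hk0 h5.symm)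
      · intro T₁ h₁ T₂ h₂ heq
        simp only [Finset.mem_filter, Finset.mem_univ, true_and] at h₁ h₂
        rw [key T₁ h₁.2, key T₂ h₂.2, heq]
      · intro S hS
        rw [Finset.mem_powersetCard] at hS
        refine ⟨Finset.univ.filter fun x : G => mk x ∈ S, ?_, ?_⟩
        · simp only [Finset.mem_filter, Finset.mem_univ, true_and]
          have hfix : (Finset.univ.filter fun x : G => mk x ∈ S).image
              (fun x => g * x) = Finset.univ.filter fun x : G => mk x ∈ S := by
            apply Finset.eq_of_subset_of_card_le
            · intro y hy
              simp only [Finset.mem_image, Finset.mem_filter, Finset.mem_univ,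
                true_and] at hy ⊢
              obtain ⟨x, hx, rfl⟩ := hy
              have : mk (g * x) = mk x := by
                rw [hmkeq]
                have : x * (g * x)⁻¹ = g⁻¹ := by group
                rw [this]
                exact (Subgroup.inv_mem_iff H).2 (Subgroup.mem_zpowers g)
              rwa [this]
            · rw [Finset.card_image_of_injective _ (mul_right_injective g)]
          refine ⟨?_, hfix⟩
          rw [hfilterS, hS.2, hdk]
        · ext q
          simp only [Finset.mem_image, Finset.mem_filter, Finset.mem_univ, true_and]
          constructor
          · rintro ⟨x, hx, rfl⟩; exact hx
          · intro hq
            induction q using Quotient.inductionOn' with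
            | h x => exact ⟨x, hq, rfl⟩
    rw [hbij, Finset.card_powersetCard, Finset.card_univ, hQm]
    refine ⟨rfl, ?_⟩
    have hdm0 : 0 < d * m := Nat.mul_pos hd0 hm
    have h6 := Nat.add_one_mul_choose_eq (d * m - 1) (d - 1)
    have e1 : d * m - 1 + 1 = d * m := by omega
    have e2 : d - 1 + 1 = d := by omega
    rw [e1, e2] at h6
    have h7 : (d * m).choose d * d = (d * m - 1).choose (d - 1) * m * d := by
      rw [← h6]; ring
    exact Nat.eq_of_mul_eq_mul_right hd0 h7
  · intro hndvd
    rw [Finset.card_eq_zero, Finset.eq_empty_iff_forall_notMem]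
    intro T hT
    simp only [Finset.mem_filter, Finset.mem_univ, true_and] at hT
    have h5 := hcard_of_fixed T hT.2
    rw [hT.1] at h5
    exact hndvd ⟨_, by rw [h5]; ring⟩
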